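/- There exists an XOS valuation on 3 items satisfying the relative valuation constraint for which the equal-marginal-utility price vector is not a Nash equilibrium: with v(S) = max(Σ_{i∈S} f1_i, Σ_{i∈S} f2_i) where f1=(2,1,1), f2=(3,0,0), and budget 3/2, the prices (7/6, 1/6, 1/6) are not a PNE because seller 1 gains by raising its price to 4/3. -/

import Mathlib

open Finset

/-- Total price of a bundle `S`. -/
def price {n : ℕ} (p : Fin n → ℝ) (S : Finset (Fin n)) : ℝ := ∑ i ∈ S, p i

/-- Additive valuation induced by item values. -/
def addVal {n : ℕ} (v : Fin n → ℝ) (S : Finset (Fin n)) : ℝ := ∑ i ∈ S, v i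

/-- `S` is a utility-maximizing affordable bundle for the budgeted buyer:
it is within budget and has utility `v S - p S` at least that of every other
affordable bundle (unaffordable bundles have utility `-∞`). -/
def demandOpt {n : ℕ} (v : Finset (Fin n) → ℝ) (B : ℝ) (p : Fin n → ℝ)
    (S : Finset (Fin n)) : Prop :=
  price p S ≤ B ∧ ∀ T : Finset (Fin n), price p T ≤ B → v T - price p T ≤ v S - price p S

/-- Seller `i`'s utility: the posted price if the item is bought, else `0`. -/
def sellerUtil {n : ℕ} (p : Fin n → ℝ) (S : Finset (Fin n)) (i : Fin n) : ℝ :=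
  if i ∈ S then p i else 0

/-- `p` is a pure Nash equilibrium of the pricing game with buyer-choice
function `X`: no seller can strictly gain by unilaterally changing
her (nonnegative) price. -/
def isPNE {n : ℕ} (v : Finset (Fin n) → ℝ) (B : ℝ)
    (X : (Fin n → ℝ) → Finset (Fin n)) (p : Fin n → ℝ) : Prop :=
  ∀ i : Fin n, ∀ q : ℝ, 0 ≤ q →
    sellerUtil (Function.update p i q) (X (Function.update p i q)) i ≤
      sellerUtil p (X p) i

/-- The XOS valuation of the example: the maximum of the two additive
functions `f1 = (2,1,1)` and `f2 = (3,0,0)`. -/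
noncomputable def vXOS (S : Finset (Fin 3)) : ℝ :=
  max (∑ i ∈ S, (![2, 1, 1] : Fin 3 → ℝ) i) (∑ i ∈ S, (![3, 0, 0] : Fin 3 → ℝ) i)

lemma exists_opt (q : Fin 3 → ℝ) : ∃ S, demandOpt vXOS (3/2) q S := by
  obtain ⟨S, hS, hmax⟩ := Finset.exists_max_image
    (Finset.univ.filter (fun T => price q T ≤ 3/2)) (fun T => vXOS T - price q T)
    ⟨∅, by simp [price]; norm_num⟩
  exact ⟨S, (Finset.mem_filter.mp hS).2,
    fun T hT => hmax T (Finset.mem_filter.mpr ⟨Finset.mem_univ _, hT⟩)⟩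

lemma opt_special : demandOpt vXOS (3/2) ![4/3, 1/6, 1/6] {0} := by
  constructor
  · norm_num [price]
  · intro T hT
    fin_cases T <;>
      simp_all [price, vXOS, Fin.sum_univ_three] <;> norm_num <;> linarith

lemma opt_p (S : Finset (Fin 3)) (h : demandOpt vXOS (3/2) ![7/6, 1/6, 1/6] S) :
    S = Finset.univ := by
  have h2 := h.2 Finset.univ (by norm_num [price, Fin.sum_univ_three, Matrix.cons_val_two, Matrix.vecHead, Matrix.vecTail])
  fin_cases S <;> simp_all [price, vXOS, Fin.sum_univ_three] <;>
    first | rfl | decide | linarith | norm_num at h2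

open Classical in
noncomputable def Xfun (q : Fin 3 → ℝ) : Finset (Fin 3) :=
  if q 0 = 4/3 ∧ q 1 = 1/6 ∧ q 2 = 1/6 then {0} else Classical.choose (exists_opt q)

lemma Xfun_opt (q : Fin 3 → ℝ) : demandOpt vXOS (3/2) q (Xfun q) := by
  unfold Xfun
  split_ifs with h
  · have hq : q = ![4/3, 1/6, 1/6] := by
      funext i; fin_cases i <;> simp [h.1, h.2.1, h.2.2]
    rw [hq]; exact opt_special
  · exact Classical.choose_spec (exists_opt q)

lemma update_eq : Function.update (![7/6, 1/6, 1/6] : Fin 3 → ℝ) 0 (4/3) =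
    ![4/3, 1/6, 1/6] := by
  funext i; fin_cases i <;> simp [Function.update]

lemma Xfun_p : Xfun ![7/6, 1/6, 1/6] = Finset.univ := by
  have h : ¬ ((![7/6, 1/6, 1/6] : Fin 3 → ℝ) 0 = 4/3 ∧
      (![7/6, 1/6, 1/6] : Fin 3 → ℝ) 1 = 1/6 ∧ (![7/6, 1/6, 1/6] : Fin 3 → ℝ) 2 = 1/6) := by
    norm_num
  have hx : Xfun ![7/6, 1/6, 1/6] = Classical.choose (exists_opt ![7/6, 1/6, 1/6]) := by
    unfold Xfun; rw [if_neg h]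
  rw [hx]
  exact opt_p _ (Classical.choose_spec (exists_opt ![7/6, 1/6, 1/6]))

lemma Xfun_p' : Xfun ![4/3, 1/6, 1/6] = {0} := by
  unfold Xfun; rw [if_pos (by norm_num [Matrix.cons_val_two, Matrix.vecHead, Matrix.vecTail])]


/-- Example 4: an XOS valuation on 3 items satisfying the relative valuation
constraint (with respect to the marginal values `m i = v(N) - v(N \ {i})`),
for which the equal-marginal-utility prices `(7/6, 1/6, 1/6)` with budget
`3/2` are not a PNE: seller `1` (index `0`) gains by raising her price to
`4/3`. -/
theorem stmt17 (B : ℝ) (hB : B = 3 / 2)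
    (m : Fin 3 → ℝ)
    (hm : ∀ i, m i = vXOS Finset.univ - vXOS (Finset.univ.erase i))
    (p : Fin 3 → ℝ) (hp : p = ![7 / 6, 1 / 6, 1 / 6]) :
    (∀ i, (∑ j ∈ Finset.univ.erase i, m j - B) / ((3 : ℝ) - 1) < m i) ∧
      (∀ i, p i = (B + ((3 : ℝ) - 1) * m i - ∑ j ∈ Finset.univ.erase i, m j) / 3) ∧
      ∃ X : (Fin 3 → ℝ) → Finset (Fin 3),
        (∀ q, demandOpt vXOS B q (X q)) ∧
          sellerUtil p (X p) 0 <
            sellerUtil (Function.update p 0 (4 / 3))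
              (X (Function.update p 0 (4 / 3))) 0 ∧
          ¬ isPNE vXOS B X p := by
  subst hB hp
  have e0 : (Finset.univ.erase (0 : Fin 3)) = {1, 2} := by decide
  have e1 : (Finset.univ.erase (1 : Fin 3)) = {0, 2} := by decide
  have e2 : (Finset.univ.erase (2 : Fin 3)) = {0, 1} := by decide
  have s12a : (∑ i ∈ ({1, 2} : Finset (Fin 3)), (![2, 1, 1] : Fin 3 → ℝ) i) = 2 := by
    rw [Finset.sum_pair (by decide)]; norm_num [Matrix.cons_val_two, Matrix.vecHead, Matrix.vecTail]
  have s12b : (∑ i ∈ ({1, 2} : Finset (Fin 3)), (![3, 0, 0] : Fin 3 → ℝ) i) = 0 := by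
    rw [Finset.sum_pair (by decide)]; norm_num [Matrix.cons_val_two, Matrix.vecHead, Matrix.vecTail]
  have s02a : (∑ i ∈ ({0, 2} : Finset (Fin 3)), (![2, 1, 1] : Fin 3 → ℝ) i) = 3 := by
    rw [Finset.sum_pair (by decide)]; norm_num [Matrix.cons_val_two, Matrix.vecHead, Matrix.vecTail]
  have s02b : (∑ i ∈ ({0, 2} : Finset (Fin 3)), (![3, 0, 0] : Fin 3 → ℝ) i) = 3 := by
    rw [Finset.sum_pair (by decide)]; norm_num [Matrix.cons_val_two, Matrix.vecHead, Matrix.vecTail]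
  have s01a : (∑ i ∈ ({0, 1} : Finset (Fin 3)), (![2, 1, 1] : Fin 3 → ℝ) i) = 3 := by
    rw [Finset.sum_pair (by decide)]; norm_num
  have s01b : (∑ i ∈ ({0, 1} : Finset (Fin 3)), (![3, 0, 0] : Fin 3 → ℝ) i) = 3 := by
    rw [Finset.sum_pair (by decide)]; norm_num
  have hm' : m = ![2, 1, 1] := by
    funext i
    fin_cases i <;> rw [hm] <;>
      norm_num [vXOS, e0, e1, e2, Fin.sum_univ_three, s12a, s12b, s02a, s02b, s01a, s01b, Matrix.cons_val_two, Matrix.vecHead, Matrix.vecTail]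
  subst hm'
  refine ⟨?_, ?_, Xfun, fun q => Xfun_opt q, ?_, ?_⟩
  · intro i
    fin_cases i <;>
      norm_num [e0, e1, e2, s12a, s02a, s01a, Fin.sum_univ_three, Matrix.cons_val_two, Matrix.vecHead, Matrix.vecTail]
  · intro i
    fin_cases i <;>
      norm_num [e0, e1, e2, s12a, s02a, s01a, Fin.sum_univ_three, Matrix.cons_val_two, Matrix.vecHead, Matrix.vecTail]
  · rw [update_eq, Xfun_p, Xfun_p']
    norm_num [sellerUtil, update_eq]
  · intro hPNE
    have h := hPNE 0 (4/3) (by norm_num)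
    rw [update_eq, Xfun_p, Xfun_p'] at h
    norm_num [sellerUtil, update_eq] at h
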